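/- For any n ∈ ℕ and A ⊆ X, the family [X]^{≤n} Δ A = {B Δ A : B ⊆ X, |B| ≤ n} equals {c ⊆ X : |c Δ A| ≤ n}, and it is stable in the order-property sense: there is no sequence a_1,…,a_N ∈ X and c_1,…,c_N in the family with a_i ∈ c_j ⟺ i < j, for N > 2n + 2. -/

import Mathlib

open Set
open scoped symmDiff

variable {X : Type*}

/-- The trace of a set system `C` on a set `A`. -/
def Tr (C : Set (Set X)) (A : Set X) : Set (Set X) := (fun c => c ∩ A) '' C

/-- `C` shatters the set `A`. -/
def Shat (C : Set (Set X)) (A : Set X) : Prop := ∀ t ⊆ A, ∃ c ∈ C, c ∩ A = t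

/-- The VC dimension of `C` is at most `d`. -/
def VCLe (C : Set (Set X)) (d : ℕ) : Prop := ∀ A : Finset X, Shat C ↑A → A.card ≤ d

/-- The VC dimension of `C` is exactly `d`. -/
def VCEq (C : Set (Set X)) (d : ℕ) : Prop :=
  VCLe C d ∧ ∃ A : Finset X, A.card = d ∧ Shat C ↑A

/-- The Sauer–Shelah bound `Φ_d(n) = Σ_{i=0}^d C(n,i)`. -/
def Phi (d n : ℕ) : ℕ := ∑ i ∈ Finset.range (d + 1), n.choose i

/-- `C` is a `d`-maximum class. -/
def IsMaximum (C : Set (Set X)) (d : ℕ) : Prop :=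
  VCEq C d ∧ ∀ A : Finset X, (Tr C ↑A).ncard = Phi d A.card

/-- `C` is a `d`-maximal class. -/
def IsMaximal (C : Set (Set X)) (d : ℕ) : Prop :=
  VCEq C d ∧ ∀ c ∉ C, VCEq (insert c C) (d + 1)

/-- `C` has the order property of length `N`. -/
def HasOrderProp (C : Set (Set X)) (N : ℕ) : Prop :=
  ∃ a : Fin N → X, ∃ f : Fin N → Set X, (∀ i, f i ∈ C) ∧ ∀ i j, a i ∈ f j ↔ i < j

/-- `[X]^{≤n} Δ A` equals `{c : |c Δ A| ≤ n}` and is stable. -/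
theorem smallSets_symmDiff_stable (n : ℕ) (A : Set X) :
    ((fun B => B ∆ A) '' {B : Set X | B.Finite ∧ B.ncard ≤ n} =
      {c : Set X | (c ∆ A).Finite ∧ (c ∆ A).ncard ≤ n}) ∧
    ∀ N : ℕ, 2 * n + 2 < N →
      ¬ HasOrderProp ((fun B => B ∆ A) '' {B : Set X | B.Finite ∧ B.ncard ≤ n}) N := by
  constructor
  · ext c
    constructor
    · rintro ⟨B, ⟨hB, hBn⟩, rfl⟩
      simpa [symmDiff_symmDiff_cancel_right] using And.intro hB hBn
    · rintro ⟨hc, hcn⟩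
      exact ⟨c ∆ A, ⟨hc, hcn⟩, by simp [symmDiff_symmDiff_cancel_right]⟩
  · intro N hN ⟨a, f, hf, hord⟩
    -- a is injective
    have hapos : 0 < N := by omega
    have hainj : Function.Injective a := by
      intro i j hij
      by_contra hne
      rcases lt_or_gt_of_ne (fun h => hne h) with h | h
      · have h1 := (hord i j).mpr h
        have h2 := (hord j j).mp (hij ▸ h1)
        exact lt_irrefl j h2
      · have h1 := (hord j i).mpr h
        have h2 := (hord i i).mp (hij.symm ▸ h1)
        exact lt_irrefl i h2
    obtain ⟨B0, ⟨hB0f, hB0n⟩, hB0⟩ := hf ⟨0, hapos⟩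
    obtain ⟨BL, ⟨hBLf, hBLn⟩, hBL⟩ := hf ⟨N - 1, by omega⟩
    -- for i < N - 1, a i ∈ BL ∆ B0
    have key : ∀ i : Fin N, (i : ℕ) < N - 1 → a i ∈ BL ∆ B0 := by
      intro i hi
      have hBL' : BL ∆ A = f ⟨N - 1, by omega⟩ := hBL
      have h1 : a i ∈ BL ∆ A := by
        rw [hBL']; exact (hord i ⟨N - 1, by omega⟩).mpr (Fin.lt_def.mpr hi)
      have h2 : a i ∉ B0 ∆ A := by
        have hB0' : B0 ∆ A = f ⟨0, hapos⟩ := hB0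
        rw [hB0']
        intro h
        have := (hord i ⟨0, hapos⟩).mp h
        simp [Fin.lt_def] at this
      rw [Set.mem_symmDiff] at h1 h2 ⊢
      by_cases hA : a i ∈ A <;> tauto
    -- but BL ∆ B0 has at most 2n elements
    have hfin : (BL ∆ B0).Finite := (hBLf.union hB0f).subset symmDiff_subset_union
    have hcard : (BL ∆ B0).ncard ≤ 2 * n := by
      calc (BL ∆ B0).ncard ≤ (BL ∪ B0).ncard :=
            Set.ncard_le_ncard symmDiff_subset_union (hBLf.union hB0f)
        _ ≤ BL.ncard + B0.ncard := Set.ncard_union_le BL B0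
        _ ≤ 2 * n := by omega
    -- derive contradiction via injection of Fin (N-1)
    let g : Fin (N - 1) → X := fun i => a ⟨i, by omega⟩
    have hginj : Function.Injective g := by
      intro i j hij
      have h := congrArg Fin.val (hainj hij)
      exact Fin.ext h
    have hgmem : ∀ i, g i ∈ BL ∆ B0 := fun i => key ⟨i, by omega⟩ (by simpa using i.isLt)
    have : N - 1 ≤ (BL ∆ B0).ncard := by
      have hsub : Set.range g ⊆ BL ∆ B0 := by rintro _ ⟨i, rfl⟩; exact hgmem i
      calc N - 1 = Nat.card (Fin (N - 1)) := by simp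
        _ = Nat.card (Set.range g) := (Nat.card_range_of_injective hginj).symm
        _ = (Set.range g).ncard := Nat.card_coe_set_eq _
        _ ≤ (BL ∆ B0).ncard := Set.ncard_le_ncard hsub hfin
    omega
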